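/- Let a, λ, c > 0 and M(x) = (c/(1 − exp(a/λ))) · exp((a/λ)x). Let w : [0,∞) × [0,1] → ℝ be continuously differentiable and satisfy w_t(t,x) + λ w_x(t,x) = 0 for all t ≥ 0 and x ∈ [0,1], w(t,0) = w(t,1) for all t ≥ 0, and ∫₀¹ M(x) w(t,x) dx = 0 for all t ≥ 0. Then w vanishes identically: w(t,x) = 0 for all t ≥ 0 and all x ∈ [0,1]. In other words, the pair consisting of the periodic transport dynamics and the output w ↦ ∫₀¹ M(x)w(x)dx is approximately observable in infinite time along classical solutions. -/

import Mathlib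

open MeasureTheory

/-- The forwarding gain `M(x) = (c/(1 − e^{a/λ})) e^{(a/λ)x}`, unique solution of
`λM′ = aM` on `[0,1]` with `M(0) = M(1) + c`. -/
noncomputable def Mfun (a lam c : ℝ) (x : ℝ) : ℝ :=
  (c / (1 - Real.exp (a / lam))) * Real.exp ((a / lam) * x)

open Set

lemma Mfun_hasDerivAt (a lam c : ℝ) (x : ℝ) :
    HasDerivAt (Mfun a lam c) ((a/lam) * Mfun a lam c x) x := by
  unfold Mfun
  have h : HasDerivAt (fun x : ℝ => Real.exp ((a/lam) * x))
      ((a/lam) * Real.exp ((a/lam)*x)) x := by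
    simpa [mul_comm] using ((hasDerivAt_id x).const_mul (a/lam)).exp
  simpa [mul_comm, mul_assoc, mul_left_comm] using h.const_mul (c / (1 - Real.exp (a/lam)))

lemma Mfun_continuous (a lam c : ℝ) : Continuous (Mfun a lam c) := by
  unfold Mfun; continuity

lemma Mfun_sub (a lam c : ℝ) (ha : 0 < a) (hlam : 0 < lam) :
    Mfun a lam c 0 - Mfun a lam c 1 = c := by
  have h1 : (1:ℝ) < Real.exp (a/lam) := by
    rw [show (1:ℝ) = Real.exp 0 by simp]
    exact Real.exp_lt_exp.2 (div_pos ha hlam)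
  have hne : 1 - Real.exp (a/lam) ≠ 0 := by nlinarith
  unfold Mfun
  field_simp
  simp

/-- If a C¹ solution `w` of the transport equation `w_t + λw_x = 0` on
`[0,∞) × [0,1]` with periodic boundary condition `w(t,0) = w(t,1)` has zero forwarding
output `∫₀¹ M(x)w(t,x)dx = 0` for all `t ≥ 0`, then `w` vanishes identically on `[0,∞) × [0,1]`. -/
theorem statement16 (a lam c : ℝ) (ha : 0 < a) (hlam : 0 < lam) (hc : 0 < c)
    (w wt wx : ℝ → ℝ → ℝ)
    -- w is continuously differentiable with partial derivatives wt, wx: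
    (hwt : ∀ t ∈ Set.Ici (0:ℝ), ∀ x ∈ Set.Icc (0:ℝ) 1,
      HasDerivWithinAt (fun τ => w τ x) (wt t x) (Set.Ici 0) t)
    (hwx : ∀ t ∈ Set.Ici (0:ℝ), ∀ x ∈ Set.Icc (0:ℝ) 1,
      HasDerivWithinAt (fun y => w t y) (wx t x) (Set.Icc 0 1) x)
    (hwtc : ContinuousOn (fun q : ℝ × ℝ => wt q.1 q.2) (Set.Ici 0 ×ˢ Set.Icc 0 1))
    (hwxc : ContinuousOn (fun q : ℝ × ℝ => wx q.1 q.2) (Set.Ici 0 ×ˢ Set.Icc 0 1))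
    -- the transport equation:
    (hpde : ∀ t ∈ Set.Ici (0:ℝ), ∀ x ∈ Set.Icc (0:ℝ) 1, wt t x + lam * wx t x = 0)
    -- the boundary condition:
    (hbc : ∀ t ∈ Set.Ici (0:ℝ), w t 0 = w t 1)
    -- the output condition:
    (hout : ∀ t ∈ Set.Ici (0:ℝ), (∫ x in (0:ℝ)..1, Mfun a lam c x * w t x) = 0) :
    ∀ t ∈ Set.Ici (0:ℝ), ∀ x ∈ Set.Icc (0:ℝ) 1, w t x = 0 := by
  set M := Mfun a lam c with hMdef
  have hMd : ∀ x, HasDerivAt M ((a/lam) * M x) x := Mfun_hasDerivAt a lam c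
  have hMc : Continuous M := Mfun_continuous a lam c
  have hM01 : M 0 - M 1 = c := Mfun_sub a lam c ha hlam
  -- continuity helpers
  have hwcx : ∀ t ∈ Ici (0:ℝ), ContinuousOn (w t) (Icc 0 1) :=
    fun t ht x hx => (hwx t ht x hx).continuousWithinAt
  have hwct : ∀ x ∈ Icc (0:ℝ) 1, ContinuousOn (fun t => w t x) (Ici 0) :=
    fun x hx t ht => (hwt t ht x hx).continuousWithinAt
  have hwxcx : ∀ t ∈ Ici (0:ℝ), ContinuousOn (fun x => wx t x) (Icc 0 1) := by
    intro t ht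
    exact hwxc.comp ((continuous_const.prodMk continuous_id).continuousOn)
      (fun x hx => ⟨ht, hx⟩)
  have hwtct : ∀ x ∈ Icc (0:ℝ) 1, ContinuousOn (fun t => wt t x) (Ici 0) := by
    intro x hx
    exact hwtc.comp ((continuous_id.prodMk continuous_const).continuousOn)
      (fun t ht => ⟨ht, hx⟩)
  have hwxct : ∀ x ∈ Icc (0:ℝ) 1, ContinuousOn (fun t => wx t x) (Ici 0) := by
    intro x hx
    exact hwxc.comp ((continuous_id.prodMk continuous_const).continuousOn)
      (fun t ht => ⟨ht, hx⟩)
  -- FTC in time, general endpoints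
  have ftc_t : ∀ x ∈ Icc (0:ℝ) 1, ∀ t₁ ∈ Ici (0:ℝ), ∀ t₂ ∈ Ici (0:ℝ),
      (∫ σ in t₁..t₂, wt σ x) = w t₂ x - w t₁ x := by
    have base : ∀ x ∈ Icc (0:ℝ) 1, ∀ t₁ ∈ Ici (0:ℝ), ∀ t₂ ∈ Ici (0:ℝ), t₁ ≤ t₂ →
        (∫ σ in t₁..t₂, wt σ x) = w t₂ x - w t₁ x := by
      intro x hx t₁ ht₁ t₂ ht₂ h12
      apply intervalIntegral.integral_eq_sub_of_hasDeriv_right_of_le h12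
      · exact (hwct x hx).mono (fun s hs => le_trans ht₁ hs.1)
      · intro s hs
        exact (hwt s (le_trans ht₁ hs.1.le) x hx).mono_of_mem_nhdsWithin
          (mem_nhdsWithin_of_mem_nhds (Ici_mem_nhds (lt_of_le_of_lt ht₁ hs.1)))
      · exact ((hwtct x hx).mono (fun s hs => le_trans ht₁ hs.1)).intervalIntegrable_of_Icc h12
    intro x hx t₁ ht₁ t₂ ht₂
    rcases le_total t₁ t₂ with h | h
    · exact base x hx t₁ ht₁ t₂ ht₂ h
    · rw [intervalIntegral.integral_symm, base x hx t₂ ht₂ t₁ ht₁ h]; ring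
  -- FTC in space, general endpoints
  have ftc_x : ∀ t ∈ Ici (0:ℝ), ∀ x₁ ∈ Icc (0:ℝ) 1, ∀ x₂ ∈ Icc (0:ℝ) 1,
      (∫ y in x₁..x₂, wx t y) = w t x₂ - w t x₁ := by
    have base : ∀ t ∈ Ici (0:ℝ), ∀ x₁ ∈ Icc (0:ℝ) 1, ∀ x₂ ∈ Icc (0:ℝ) 1, x₁ ≤ x₂ →
        (∫ y in x₁..x₂, wx t y) = w t x₂ - w t x₁ := by
      intro t ht x₁ hx₁ x₂ hx₂ h12
      apply intervalIntegral.integral_eq_sub_of_hasDeriv_right_of_le h12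
      · exact (hwcx t ht).mono (Icc_subset_Icc hx₁.1 hx₂.2)
      · intro y hy
        have hyI : y ∈ Icc (0:ℝ) 1 := ⟨le_trans hx₁.1 hy.1.le, le_trans hy.2.le hx₂.2⟩
        exact (hwx t ht y hyI).mono_of_mem_nhdsWithin
          (mem_nhdsWithin_of_mem_nhds (Icc_mem_nhds (lt_of_le_of_lt hx₁.1 hy.1)
            (lt_of_lt_of_le hy.2 hx₂.2)))
      · exact ((hwxcx t ht).mono (Icc_subset_Icc hx₁.1 hx₂.2)).intervalIntegrable_of_Icc h12
    intro t ht x₁ hx₁ x₂ hx₂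
    rcases le_total x₁ x₂ with h | h
    · exact base t ht x₁ hx₁ x₂ hx₂ h
    · rw [intervalIntegral.integral_symm, base t ht x₂ hx₂ x₁ hx₁ h]; ring
  -- Key1 : the output derivative identity
  have key1 : ∀ t ∈ Ici (0:ℝ), (∫ x in (0:ℝ)..1, M x * wt t x) = lam * c * w t 1 := by
    intro t ht
    have hme : EqOn (fun x => M x * wt t x) (fun x => (-lam) * (M x * wx t x)) (uIcc 0 1) := by
      intro x hx
      rw [uIcc_of_le zero_le_one] at hx
      have h := hpde t ht x hx
      simp only
      linear_combination (M x) * h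
    rw [intervalIntegral.integral_congr hme, intervalIntegral.integral_const_mul]
    have hintMw : IntervalIntegrable (fun x => M x * w t x) volume 0 1 :=
      (hMc.continuousOn.mul (hwcx t ht)).intervalIntegrable_of_Icc zero_le_one
    have hint1 : IntervalIntegrable (fun x => (a/lam) * (M x * w t x)) volume 0 1 :=
      hintMw.const_mul _
    have hint2 : IntervalIntegrable (fun x => M x * wx t x) volume 0 1 :=
      (hMc.continuousOn.mul (hwxcx t ht)).intervalIntegrable_of_Icc zero_le_one
    have hparts : (∫ x in (0:ℝ)..1, ((a/lam) * (M x * w t x) + M x * wx t x))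
        = M 1 * w t 1 - M 0 * w t 0 := by
      have hderiv : ∀ y ∈ Ioo (0:ℝ) 1, HasDerivWithinAt (fun y => M y * w t y)
          ((a/lam) * (M y * w t y) + M y * wx t y) (Ioi y) y := by
        intro y hy
        have h1 := ((hMd y).hasDerivWithinAt (s := Ioi y)).mul
          ((hwx t ht y (Ioo_subset_Icc_self hy)).mono_of_mem_nhdsWithin
            (mem_nhdsWithin_of_mem_nhds (Icc_mem_nhds hy.1 hy.2)))
        exact h1.congr_deriv (by ring)
      exact intervalIntegral.integral_eq_sub_of_hasDeriv_right_of_le zero_le_one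
        (hMc.continuousOn.mul (hwcx t ht)) hderiv (hint1.add hint2)
    rw [intervalIntegral.integral_add hint1 hint2, intervalIntegral.integral_const_mul,
      hout t ht, mul_zero, zero_add] at hparts
    rw [hparts, hbc t ht]
    linear_combination (lam * w t 1) * hM01
  -- Fubini step: the time-integral of the boundary trace vanishes
  have key3 : ∀ T ∈ Ici (0:ℝ), (∫ s in (0:ℝ)..T, w s 1) = 0 := by
    intro T hT
    have hTle : (0:ℝ) ≤ T := hT
    have hMwtc : ContinuousOn (fun q : ℝ × ℝ => M q.2 * wt q.1 q.2) (Ici 0 ×ˢ Icc 0 1) :=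
      ((hMc.comp continuous_snd).continuousOn).mul hwtc
    have hInt : IntegrableOn (fun q : ℝ × ℝ => M q.2 * wt q.1 q.2)
        (Ioc 0 T ×ˢ Ioc 0 1) volume := by
      have h1 : IntegrableOn (fun q : ℝ × ℝ => M q.2 * wt q.1 q.2)
          (Icc 0 T ×ˢ Icc 0 1) volume := by
        apply (hMwtc.mono ?_).integrableOn_compact (isCompact_Icc.prod isCompact_Icc)
        exact prod_mono (fun s hs => hs.1) (fun y hy => hy)
      exact h1.mono_set (prod_mono Ioc_subset_Icc_self Ioc_subset_Icc_self)
    have swap : (∫ s in (0:ℝ)..T, ∫ x in (0:ℝ)..1, M x * wt s x)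
        = ∫ x in (0:ℝ)..1, ∫ s in (0:ℝ)..T, M x * wt s x := by
      rw [intervalIntegral.integral_of_le hTle, intervalIntegral.integral_of_le zero_le_one]
      simp_rw [intervalIntegral.integral_of_le hTle, intervalIntegral.integral_of_le zero_le_one]
      rw [MeasureTheory.integral_integral_swap]
      rw [Measure.prod_restrict, ← Measure.volume_eq_prod]
      exact hInt
    have lhs1 : (∫ s in (0:ℝ)..T, ∫ x in (0:ℝ)..1, M x * wt s x)
        = lam * c * ∫ s in (0:ℝ)..T, w s 1 := by
      rw [← intervalIntegral.integral_const_mul]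
      apply intervalIntegral.integral_congr
      intro s hs
      rw [uIcc_of_le hTle] at hs
      exact key1 s hs.1
    have rhs1 : (∫ x in (0:ℝ)..1, ∫ s in (0:ℝ)..T, M x * wt s x) = 0 := by
      have hcongr : EqOn (fun x => ∫ s in (0:ℝ)..T, M x * wt s x)
          (fun x => M x * w T x - M x * w 0 x) (uIcc 0 1) := by
        intro x hx
        rw [uIcc_of_le zero_le_one] at hx
        simp only
        rw [intervalIntegral.integral_const_mul, ftc_t x hx 0 Set.self_mem_Ici T hT]
        ring
      rw [intervalIntegral.integral_congr hcongr]
      have i1 : IntervalIntegrable (fun x => M x * w T x) volume 0 1 :=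
        (hMc.continuousOn.mul (hwcx T hT)).intervalIntegrable_of_Icc zero_le_one
      have i2 : IntervalIntegrable (fun x => M x * w 0 x) volume 0 1 :=
        (hMc.continuousOn.mul (hwcx 0 Set.self_mem_Ici)).intervalIntegrable_of_Icc zero_le_one
      rw [intervalIntegral.integral_sub i1 i2, hout T hT, hout 0 Set.self_mem_Ici, sub_zero]
    have : lam * c * ∫ s in (0:ℝ)..T, w s 1 = 0 := by rw [← lhs1, swap, rhs1]
    have hlc : lam * c ≠ 0 := by positivity
    exact (mul_eq_zero.mp this).resolve_left hlc
  -- FTC1 : boundary trace vanishes pointwise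
  have key4 : ∀ T ∈ Ici (0:ℝ), w T 1 = 0 := by
    intro T hT
    have h1I : (1:ℝ) ∈ Icc (0:ℝ) 1 := ⟨zero_le_one, le_rfl⟩
    have hcont : ContinuousOn (fun t => w t 1) (Ici 0) := hwct 1 h1I
    have hintg : IntervalIntegrable (fun t => w t 1) volume 0 T :=
      (hcont.mono (fun s hs => hs.1)).intervalIntegrable_of_Icc hT
    have hmeas : StronglyMeasurableAtFilter (fun t => w t 1) (nhdsWithin T (Ioi T)) volume :=
      ⟨Ici 0, Filter.mem_of_superset self_mem_nhdsWithin
        (fun y hy => mem_Ici.2 (le_trans (mem_Ici.1 hT) (le_of_lt (mem_Ioi.1 hy)))),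
        hcont.aestronglyMeasurable measurableSet_Ici⟩
    have hcw : ContinuousWithinAt (fun t => w t 1) (Ioi T) T :=
      (hcont T hT).mono (fun y hy => mem_Ici.2 (le_trans (mem_Ici.1 hT) (le_of_lt (mem_Ioi.1 hy))))
    have hd : HasDerivWithinAt (fun u => ∫ s in (0:ℝ)..u, w s 1) (w T 1) (Ici T) T :=
      intervalIntegral.integral_hasDerivWithinAt_right hintg hmeas hcw
    have hzero : HasDerivWithinAt (fun u => ∫ s in (0:ℝ)..u, w s 1) 0 (Ici T) T :=
      (hasDerivWithinAt_const T (Ici T) (0:ℝ)).congr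
        (fun y hy => key3 y (mem_Ici.2 (le_trans (mem_Ici.1 hT) (mem_Ici.1 hy)))) (key3 T hT)
    have hu : UniqueDiffWithinAt ℝ (Ici T) T := uniqueDiffOn_Ici T T Set.self_mem_Ici
    rw [← hd.derivWithin hu, hzero.derivWithin hu]
  -- characteristics: propagate the boundary value back into the domain
  intro t ht x hx
  have hb0 : (0:ℝ) ≤ 1 - x := by linarith [hx.2]
  have hmemT : ∀ s ∈ Icc (0:ℝ) (1-x), t + s / lam ∈ Ici (0:ℝ) := by
    intro s hs
    have := div_nonneg hs.1 hlam.le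
    simp only [mem_Ici] at ht ⊢
    linarith
  have hmemX : ∀ s ∈ Icc (0:ℝ) (1-x), x + s ∈ Icc (0:ℝ) 1 := by
    intro s hs
    exact ⟨by linarith [hx.1, hs.1], by linarith [hs.2]⟩
  have hφd : ∀ s ∈ Icc (0:ℝ) (1-x),
      HasDerivWithinAt (fun s => w (t + s / lam) (x + s)) 0 (Icc 0 (1-x)) s := by
    intro s hs
    have hlne : lam ≠ 0 := hlam.ne'
    rw [hasDerivWithinAt_iff_tendsto_slope, Metric.tendsto_nhdsWithin_nhds]
    intro ε hε
    have hpS : (t + s/lam, x + s) ∈ Ici (0:ℝ) ×ˢ Icc (0:ℝ) 1 := ⟨hmemT s hs, hmemX s hs⟩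
    have hcw := hwxc _ hpS
    rw [Metric.continuousWithinAt_iff] at hcw
    obtain ⟨δ₀, hδ₀, hcw⟩ := hcw (ε/3) (by linarith)
    refine ⟨min δ₀ (lam * δ₀), by positivity, ?_⟩
    intro s' hs' hdist
    obtain ⟨hs'I, hs'ne⟩ := hs'
    rw [mem_singleton_iff] at hs'ne
    rw [Real.dist_eq] at hdist
    have hss1 : |s' - s| < δ₀ := lt_of_lt_of_le hdist (min_le_left _ _)
    have hss2 : |s' - s| < lam * δ₀ := lt_of_lt_of_le hdist (min_le_right _ _)
    have hTm : t + s/lam ∈ Ici (0:ℝ) := hmemT s hs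
    have hT'm : t + s'/lam ∈ Ici (0:ℝ) := hmemT s' hs'I
    have hXm : x + s ∈ Icc (0:ℝ) 1 := hmemX s hs
    have hX'm : x + s' ∈ Icc (0:ℝ) 1 := hmemX s' hs'I
    set T : ℝ := t + s/lam with hTdef
    set T' : ℝ := t + s'/lam with hT'def
    set X : ℝ := x + s with hXdef
    set X' : ℝ := x + s' with hX'def
    set L : ℝ := wx T X with hLdef
    have hXX : X' - X = s' - s := by rw [hXdef, hX'def]; ring
    have hTT : T' - T = (s' - s) / lam := by rw [hTdef, hT'def]; ring
    have hslope_eq : slope (fun s => w (t + s / lam) (x + s)) s s'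
        = (w T' X' - w T X) / (s' - s) := by rw [slope_def_field]
    clear_value T T' X X' L
    -- increments via FTC
    have hA : w T' X' - w T X' = ∫ σ in T..T', wt σ X' := (ftc_t X' hX'm T hTm T' hT'm).symm
    have hB : w T X' - w T X = ∫ y in X..X', wx T y := (ftc_x T hTm X hXm X' hX'm).symm
    have huIccT : uIcc T T' ⊆ Ici (0:ℝ) := by
      rcases le_total T T' with h | h
      · rw [uIcc_of_le h]; exact fun σ hσ => le_trans hTm hσ.1
      · rw [uIcc_of_ge h]; exact fun σ hσ => le_trans hT'm hσ.1
    have huIccX : uIcc X X' ⊆ Icc (0:ℝ) 1 := by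
      rcases le_total X X' with h | h
      · rw [uIcc_of_le h]; exact Icc_subset_Icc hXm.1 hX'm.2
      · rw [uIcc_of_ge h]; exact Icc_subset_Icc hX'm.1 hXm.2
    have hA' : (∫ σ in T..T', wt σ X') = (-lam) * ∫ σ in T..T', wx σ X' := by
      rw [← intervalIntegral.integral_const_mul]
      apply intervalIntegral.integral_congr
      intro σ hσ
      have h := hpde σ (huIccT hσ) X' hX'm
      show wt σ X' = -lam * wx σ X'
      linarith
    have hi1 : IntervalIntegrable (fun σ => wx σ X') volume T T' :=
      ((hwxct X' hX'm).mono huIccT).intervalIntegrable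
    have hi2 : IntervalIntegrable (fun y => wx T y) volume X X' :=
      ((hwxcx T hTm).mono huIccX).intervalIntegrable
    -- estimates
    have habs : ∀ {u v σ : ℝ}, σ ∈ uIcc u v → |σ - u| ≤ |v - u| := by
      intro u v σ hσ
      rcases le_total u v with h | h
      · rw [uIcc_of_le h] at hσ
        rw [abs_of_nonneg (by linarith [hσ.1]), abs_of_nonneg (by linarith)]
        linarith [hσ.2]
      · rw [uIcc_of_ge h] at hσ
        rw [abs_of_nonpos (by linarith [hσ.2]), abs_of_nonpos (by linarith)]
        linarith [hσ.1]
    have hTTabs : |T' - T| = |s' - s| / lam := by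
      rw [hTT, abs_div, abs_of_pos hlam]
    have hTTlt : |T' - T| < δ₀ := by
      rw [hTTabs, div_lt_iff₀ hlam]
      linarith [hss2]
    have est2 : |(∫ σ in T..T', wx σ X') - (T' - T) * L| ≤ (ε/3) * |T' - T| := by
      have heq : (∫ σ in T..T', wx σ X') - (T' - T) * L
          = ∫ σ in T..T', (wx σ X' - L) := by
        rw [intervalIntegral.integral_sub hi1 intervalIntegrable_const,
          intervalIntegral.integral_const, smul_eq_mul]
      rw [heq, ← Real.norm_eq_abs]
      apply intervalIntegral.norm_integral_le_of_norm_le_const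
      intro σ hσ
      have hσu : σ ∈ uIcc T T' := uIoc_subset_uIcc hσ
      have hq : ((σ, X') : ℝ × ℝ) ∈ Ici (0:ℝ) ×ˢ Icc (0:ℝ) 1 := ⟨huIccT hσu, hX'm⟩
      have hdq : dist ((σ, X') : ℝ × ℝ) (T, X) < δ₀ := by
        rw [Prod.dist_eq]
        apply max_lt
        · rw [Real.dist_eq]
          exact lt_of_le_of_lt (habs hσu) hTTlt
        · rw [Real.dist_eq, hXX]
          exact hss1
      have := hcw hq hdq
      rw [Real.dist_eq] at this
      rw [Real.norm_eq_abs]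
      exact le_of_lt this
    have est1 : |(∫ y in X..X', wx T y) - (X' - X) * L| ≤ (ε/3) * |X' - X| := by
      have heq : (∫ y in X..X', wx T y) - (X' - X) * L
          = ∫ y in X..X', (wx T y - L) := by
        rw [intervalIntegral.integral_sub hi2 intervalIntegrable_const,
          intervalIntegral.integral_const, smul_eq_mul]
      rw [heq, ← Real.norm_eq_abs]
      apply intervalIntegral.norm_integral_le_of_norm_le_const
      intro y hy
      have hyu : y ∈ uIcc X X' := uIoc_subset_uIcc hy
      have hq : ((T, y) : ℝ × ℝ) ∈ Ici (0:ℝ) ×ˢ Icc (0:ℝ) 1 := ⟨hTm, huIccX hyu⟩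
      have hdq : dist ((T, y) : ℝ × ℝ) (T, X) < δ₀ := by
        rw [Prod.dist_eq]
        apply max_lt
        · simpa [Real.dist_eq] using hδ₀
        · rw [Real.dist_eq]
          exact lt_of_le_of_lt (le_trans (habs hyu) (by rw [hXX])) hss1
      have := hcw hq hdq
      rw [Real.dist_eq] at this
      rw [Real.norm_eq_abs]
      exact le_of_lt this
    -- assemble
    have hcancel : (X' - X) * L - lam * ((T' - T) * L) = 0 := by
      rw [hXX, hTT]
      field_simp
      ring
    have hphi : w T' X' - w T X
        = ((∫ y in X..X', wx T y) - (X' - X) * L)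
          - lam * ((∫ σ in T..T', wx σ X') - (T' - T) * L) := by
      have hsplit : w T' X' - w T X
          = (-lam) * (∫ σ in T..T', wx σ X') + ∫ y in X..X', wx T y := by
        rw [← hA', ← hA, ← hB]; ring
      rw [hsplit]
      linear_combination hcancel
    rw [Real.dist_eq, sub_zero, hslope_eq]
    have hD : 0 < |s' - s| := abs_pos.2 (sub_ne_zero.2 hs'ne)
    have hN : |w T' X' - w T X| ≤ 2 * (ε/3) * |s' - s| := by
      rw [hphi]
      calc |((∫ y in X..X', wx T y) - (X' - X) * L)
          - lam * ((∫ σ in T..T', wx σ X') - (T' - T) * L)|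
          ≤ |(∫ y in X..X', wx T y) - (X' - X) * L|
            + |lam| * |(∫ σ in T..T', wx σ X') - (T' - T) * L| := by
            rw [← abs_mul]; exact abs_sub _ _
        _ ≤ (ε/3) * |X' - X| + lam * ((ε/3) * |T' - T|) := by
            rw [abs_of_pos hlam]
            exact add_le_add est1 (mul_le_mul_of_nonneg_left est2 hlam.le)
        _ = 2 * (ε/3) * |s' - s| := by
            rw [hXX, hTTabs]
            field_simp
            ring
    rw [abs_div, div_lt_iff₀ hD]
    calc |w T' X' - w T X| ≤ 2 * (ε/3) * |s' - s| := hN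
      _ < ε * |s' - s| := by nlinarith
  have hφc : ContinuousOn (fun s => w (t + s / lam) (x + s)) (Icc 0 (1-x)) :=
    fun s hs => (hφd s hs).continuousWithinAt
  have hmemIcc : ∀ s ∈ Ico (0:ℝ) (1-x), Icc (0:ℝ) (1-x) ∈ nhdsWithin s (Ici s) := by
    intro s hs
    apply mem_nhdsWithin.2 ⟨Iio (1-x), isOpen_Iio, hs.2, ?_⟩
    rintro y ⟨hy1, hy2⟩
    exact ⟨le_trans hs.1 hy2, le_of_lt hy1⟩
  have hconst := constant_of_has_deriv_right_zero hφc
    (fun s hs => (hφd s (mem_Icc_of_Ico hs)).mono_of_mem_nhdsWithin (hmemIcc s hs))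
  have hfin := hconst (1-x) ⟨hb0, le_rfl⟩
  rw [show x + (1-x) = 1 by ring] at hfin
  have h4 := key4 (t + (1-x)/lam) (hmemT (1-x) ⟨hb0, le_rfl⟩)
  rw [h4] at hfin
  simpa using hfin.symm
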